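/- arXiv:2006.01953 — 2 statements merged into one kernel-verified Lean document; each statement's English description precedes it below -/
import Mathlib

section
/- Let Y be a topological space and L ⊆ Y a compact subset. Then the closure of L is contained in L ∪ V(Y), where V(Y) is the set of branch points of Y (points y for which there exists z ≠ y such that every neighborhood of z meets every neighborhood of y). -/
/-- The set of branch points of `Y`: points `y` for which there exists `z ≠ y`
such that every open neighborhood of `z` meets every open neighborhood of `y`. -/
def BranchPoints (Y : Type*) [TopologicalSpace Y] : Set Y :=
  { y | ∃ z : Y, z ≠ y ∧
      ∀ U V : Set Y, IsOpen U → IsOpen V → y ∈ U → z ∈ V → (U ∩ V).Nonempty }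

/-- If `L ⊆ Y` is compact, then `closure L ⊆ L ∪ V(Y)`. -/
theorem closure_subset_union_branchPoints
    {Y : Type*} [TopologicalSpace Y] (L : Set Y) (hL : IsCompact L) :
    closure L ⊆ L ∪ BranchPoints Y := by
  intro y hy
  by_cases hyL : y ∈ L
  · exact Or.inl hyL
  · right
    have hne : (nhds y ⊓ Filter.principal L).NeBot := mem_closure_iff_clusterPt.mp hy
    obtain ⟨z, hzL, hz⟩ := hL.exists_clusterPt (f := nhds y ⊓ Filter.principal L) inf_le_right
    exact ⟨z, fun h => hyL (h ▸ hzL), fun U V hU hV hyU hzV => by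
      have hzy : ClusterPt z (nhds y) := hz.mono inf_le_left
      have h2 : (nhds z ⊓ nhds y).NeBot := hzy
      have h3 := Filter.inf_neBot_iff.mp h2 (hV.mem_nhds hzV) (hU.mem_nhds hyU)
      exact h3.imp fun x hx => ⟨hx.2, hx.1⟩⟩
end

section
/- Let X be a locally compact Hausdorff space, Y a T₁ space whose set of branch points V(Y) is locally finite, and p : X → Y an open continuous surjection. Then for every compact L ⊆ Y there exists a compact K ⊆ X with p(K) = L. -/
/-- If `y ∉ L`, `L` is compact, and every open neighborhood of `y` meets `L`,
then `y` is a branch point. -/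
lemma branch_of_adherent {Y : Type*} [TopologicalSpace Y] {L : Set Y} (hL : IsCompact L)
    {y : Y} (hy : y ∉ L)
    (hadh : ∀ W : Set Y, IsOpen W → y ∈ W → (W ∩ L).Nonempty) :
    y ∈ BranchPoints Y := by
  by_contra hbr
  have hsep : ∀ z ∈ L, ∃ U V : Set Y, IsOpen U ∧ IsOpen V ∧ y ∈ U ∧ z ∈ V ∧ U ∩ V = ∅ := by
    intro z hz
    by_contra h
    push_neg at h
    exact hbr ⟨z, fun hzy => hy (hzy ▸ hz), h⟩
  choose! U V hUo hVo hyU hzV hUV using hsep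
  obtain ⟨t, htL, hcov⟩ := hL.elim_nhds_subcover V
    (fun z hz => (hVo z hz).mem_nhds (hzV z hz))
  have hUyO : IsOpen (⋂ z ∈ t, U z) := isOpen_biInter_finset fun z hz => hUo z (htL z hz)
  have hyUy : y ∈ ⋂ z ∈ t, U z := Set.mem_iInter₂.mpr fun z hz => hyU z (htL z hz)
  obtain ⟨w, hwU, hwL⟩ := hadh _ hUyO hyUy
  obtain ⟨z, hzt, hwV⟩ := Set.mem_iUnion₂.mp (hcov hwL)
  have : w ∈ U z ∩ V z := ⟨Set.mem_iInter₂.mp hwU z hzt, hwV⟩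
  rw [hUV z (htL z hzt)] at this
  exact this

/-- Let `X` be locally compact Hausdorff, `Y` a `T₁` space whose set of branch
points is locally finite, and `p : X → Y` an open continuous surjection. Then
every compact `L ⊆ Y` is the image of some compact `K ⊆ X`. -/
theorem propK_of_locallyFinite_branchPoints
    {X Y : Type*} [TopologicalSpace X] [LocallyCompactSpace X] [T2Space X]
    [TopologicalSpace Y] [T1Space Y]
    (hV : ∀ y : Y, ∃ U : Set Y, IsOpen U ∧ y ∈ U ∧ (U ∩ BranchPoints Y).Finite)
    (p : X → Y) (hc : Continuous p) (ho : IsOpenMap p)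
    (hs : Function.Surjective p) :
    ∀ L : Set Y, IsCompact L → ∃ K : Set X, IsCompact K ∧ p '' K = L := by
  intro L hL
  choose U hUo hUm hUf using hV
  obtain ⟨t, _, htc⟩ := hL.elim_nhds_subcover U fun y _ => (hUo y).mem_nhds (hUm y)
  set O : Set Y := ⋃ y ∈ t, U y with hOdef
  have hOopen : IsOpen O := isOpen_biUnion fun y _ => hUo y
  have hFfin : (O ∩ BranchPoints Y).Finite := by
    rw [hOdef, Set.iUnion₂_inter]
    exact t.finite_toSet.biUnion fun y _ => hUf y
  set B : Set Y := (O ∩ BranchPoints Y) \ L with hBdef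
  have hBclosed : IsClosed B := (hFfin.subset Set.diff_subset).isClosed
  have hGopen : IsOpen (p ⁻¹' (O \ B)) := (hOopen.sdiff hBclosed).preimage hc
  have key : ∀ y ∈ L, ∃ K : Set X, IsCompact K ∧ K ⊆ p ⁻¹' (O \ B) ∧ y ∈ p '' interior K := by
    intro y hy
    obtain ⟨x, rfl⟩ := hs y
    have hx : x ∈ p ⁻¹' (O \ B) := ⟨htc hy, fun hB => hB.2 hy⟩
    obtain ⟨K, hKc, hxK, hKG⟩ := exists_compact_subset hGopen hx
    exact ⟨K, hKc, hKG, ⟨x, hxK, rfl⟩⟩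
  choose! K hKc hKG hKim using key
  obtain ⟨s, hsL, hcov⟩ := hL.elim_nhds_subcover (fun y => p '' interior (K y))
    (fun y hy => (ho _ isOpen_interior).mem_nhds (hKim y hy))
  set M : Set X := ⋃ y ∈ s, K y with hMdef
  have hMc : IsCompact M := s.finite_toSet.isCompact_biUnion fun y hy => hKc y (hsL y hy)
  have hMG : M ⊆ p ⁻¹' (O \ B) := Set.iUnion₂_subset fun y hy => hKG y (hsL y hy)
  set A : Set X := M ∩ p ⁻¹' L with hAdef
  have hAclosed : IsClosed A := by
    refine isClosed_of_closure_subset fun x hx => ?_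
    have hxM : x ∈ M := hMc.isClosed.closure_subset (closure_mono Set.inter_subset_left hx)
    refine ⟨hxM, ?_⟩
    by_contra hpx
    have hadh : ∀ W : Set Y, IsOpen W → p x ∈ W → (W ∩ L).Nonempty := by
      intro W hWo hWx
      obtain ⟨a, haW, haA⟩ := mem_closure_iff.mp hx (p ⁻¹' W) (hWo.preimage hc) hWx
      exact ⟨p a, haW, haA.2⟩
    have hbr : p x ∈ BranchPoints Y := branch_of_adherent hL hpx hadh
    have hxO : p x ∈ O \ B := hMG hxM
    exact hxO.2 ⟨⟨hxO.1, hbr⟩, hpx⟩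
  have hAc : IsCompact A := hMc.of_isClosed_subset hAclosed Set.inter_subset_left
  refine ⟨A, hAc, Set.Subset.antisymm ?_ ?_⟩
  · rintro _ ⟨x, hx, rfl⟩
    exact hx.2
  · intro y hy
    obtain ⟨y', hy's, x, hxint, hpx⟩ := Set.mem_iUnion₂.mp (hcov hy)
    exact ⟨x, ⟨Set.mem_biUnion hy's (interior_subset hxint), by
      simpa [Set.mem_preimage, hpx] using hy⟩, hpx⟩
end
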